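/- With the setup described in the context, for all y, y' ∈ (Kˣ)^k the following are equivalent: (i) there exists t ∈ G such that t_i·x(y)_i = x(y')_i in K for all i ∈ {1,…,r}; (ii) y^{L2} = y'^{L2}. (Paper: Lemma 3.8 '2rep': two v-normalized representatives define the same point of the torus T_Q if and only if their L2-powers agree.) -/
import Mathlib

/-- The `N×N` submatrix of an `r×N` matrix formed by its first `N` rows. -/
def firstRows {r N : ℕ} (hNr : N ≤ r) (A : Matrix (Fin r) (Fin N) ℤ) :
    Matrix (Fin N) (Fin N) ℤ :=
  Matrix.of fun i j => A ⟨(i : ℕ), by have := i.isLt; omega⟩ j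

/-- The `k×k` bottom-right block of an `N×N` matrix (rows and columns
`N-k+1, …, N`). -/
def lowerRight {N k : ℕ} (hkN : k ≤ N) (H : Matrix (Fin N) (Fin N) ℤ) :
    Matrix (Fin k) (Fin k) ℤ :=
  Matrix.of fun i j =>
    H ⟨N - k + (i : ℕ), by have := i.isLt; omega⟩
      ⟨N - k + (j : ℕ), by have := j.isLt; omega⟩

/-- The `v`-normalized tuple `x(y) ∈ K^r` attached to `y ∈ (Kˣ)^k`:
`x(y)_i = 0` for `i ≤ N-k`, `x(y)_i = y_{i-(N-k)}` for `N-k < i ≤ N`, and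
`x(y)_i = 1` for `i > N`. -/
def xvec {K : Type*} [Field K] {k N r : ℕ} (hkN : k ≤ N) (hNr : N ≤ r)
    (y : Fin k → Kˣ) : Fin r → K :=
  fun i =>
    if h1 : (i : ℕ) < N - k then 0
    else if h2 : (i : ℕ) < N then (y ⟨(i : ℕ) - (N - k), by omega⟩ : K)
    else 1

section Helpers

private def embCast {N r : ℕ} (hNr : N ≤ r) : Fin N ↪ Fin r :=
  ⟨fun i => ⟨(i : ℕ), lt_of_lt_of_le i.isLt hNr⟩, fun a b h => by simpa [Fin.ext_iff] using h⟩

private def embShift {k N : ℕ} (hkN : k ≤ N) : Fin k ↪ Fin N :=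
  ⟨fun i => ⟨N - k + (i : ℕ), by have := i.isLt; omega⟩, fun a b h => by
    simp only [Fin.mk.injEq, Fin.ext_iff] at h ⊢
    omega⟩

private lemma prod_eq_prod_emb {G : Type*} [CommMonoid G] {α β : Type*} [Fintype α] [Fintype β]
    [DecidableEq β] (e : α ↪ β) (F : β → G) (hF : ∀ b, (∀ a, e a ≠ b) → F b = 1) :
    ∏ b, F b = ∏ a, F (e a) := by
  rw [← Finset.prod_map Finset.univ e F]
  refine (Finset.prod_subset (Finset.subset_univ _) ?_).symm
  intro b _ hb
  simp only [Finset.mem_map, Finset.mem_univ, true_and] at hb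
  exact hF b (fun a ha => hb ⟨a, ha⟩)

private lemma zpow_sum_local {G : Type*} [CommGroup G] (a : G) {ι : Type*} (s : Finset ι)
    (f : ι → ℤ) : a ^ (∑ i ∈ s, f i) = ∏ i ∈ s, a ^ f i := by
  induction s using Finset.cons_induction with
  | empty => simp
  | cons i s hi ih => rw [Finset.sum_cons, Finset.prod_cons, zpow_add, ih]

private lemma prod_pow_mul {G : Type*} [CommGroup G] {n m p : ℕ} (t : Fin n → G)
    (M : Matrix (Fin n) (Fin m) ℤ) (P : Matrix (Fin m) (Fin p) ℤ) (j : Fin p) :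
    ∏ i, t i ^ ((M * P) i j) = ∏ l, (∏ i, t i ^ M i l) ^ P l j := by
  simp only [Matrix.mul_apply, zpow_sum_local, zpow_mul]
  rw [Finset.prod_comm]
  exact Finset.prod_congr rfl fun l _ => (Finset.prod_zpow _ _ _)

private lemma prod_shift {G : Type*} [CommGroup G] {k N : ℕ} (hkN : k ≤ N)
    (H : Matrix (Fin N) (Fin N) ℤ)
    (hlow : ∀ i j : Fin N, (i : ℕ) < (j : ℕ) → H i j = 0)
    (u : Fin N → G) (j : Fin N) (hj : N - k ≤ (j : ℕ)) :
    ∏ i, u i ^ H i j = ∏ i : Fin k, u (embShift hkN i) ^ H (embShift hkN i) j := by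
  refine prod_eq_prod_emb (embShift hkN) _ (fun b hb => ?_)
  have hbk : (b : ℕ) < N - k := by
    by_contra hge
    exact hb ⟨(b : ℕ) - (N - k), by have := b.isLt; omega⟩
      (Fin.ext (show N - k + ((b : ℕ) - (N - k)) = (b : ℕ) by omega))
  rw [hlow b j (by omega), zpow_zero]

private lemma exists_zpow_eq {K : Type*} [Field K] [IsAlgClosed K] (a : Kˣ) {e : ℤ}
    (he : e ≠ 0) : ∃ b : Kˣ, b ^ e = a := by
  rcases lt_trichotomy e 0 with h | h | h
  · obtain ⟨n, hn, rfl⟩ : ∃ n : ℕ, 0 < n ∧ e = -(n : ℤ) := ⟨e.natAbs, by omega, by omega⟩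
    obtain ⟨z, hz⟩ := IsAlgClosed.exists_pow_nat_eq ((a⁻¹ : Kˣ) : K) hn
    have hz0 : z ≠ 0 := fun h0 =>
      Units.ne_zero a⁻¹ (by rw [h0, zero_pow hn.ne'] at hz; exact hz.symm)
    refine ⟨Units.mk0 z hz0, ?_⟩
    have : (Units.mk0 z hz0) ^ n = a⁻¹ := by
      ext; rw [Units.val_pow_eq_pow_val]; exact hz
    rw [zpow_neg, zpow_natCast, this, inv_inv]
  · exact absurd h he
  · obtain ⟨n, hn, rfl⟩ : ∃ n : ℕ, 0 < n ∧ e = (n : ℤ) := ⟨e.natAbs, by omega, by omega⟩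
    obtain ⟨z, hz⟩ := IsAlgClosed.exists_pow_nat_eq ((a : Kˣ) : K) hn
    have hz0 : z ≠ 0 := fun h0 =>
      Units.ne_zero a (by rw [h0, zero_pow hn.ne'] at hz; exact hz.symm)
    refine ⟨Units.mk0 z hz0, ?_⟩
    rw [zpow_natCast]; ext; rw [Units.val_pow_eq_pow_val]; exact hz

private lemma solve_triangular {K : Type*} [Field K] [IsAlgClosed K] {n : ℕ}
    (H : Matrix (Fin n) (Fin n) ℤ)
    (hlow : ∀ i j : Fin n, (i : ℕ) < (j : ℕ) → H i j = 0)
    (hdiag : ∀ i, H i i ≠ 0) (m : ℕ) (w : Fin n → Kˣ)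
    (hw : ∀ j : Fin n, m ≤ (j : ℕ) → ∏ i, w i ^ H i j = 1) :
    ∃ t : Fin n → Kˣ, (∀ i : Fin n, m ≤ (i : ℕ) → t i = w i) ∧
      ∀ j, ∏ i, t i ^ H i j = 1 := by
  induction m generalizing w with
  | zero => exact ⟨w, fun _ _ => rfl, fun j => hw j (Nat.zero_le _)⟩
  | succ m ih =>
    by_cases hmn : m < n
    · obtain ⟨b, hb⟩ := exists_zpow_eq
        ((∏ i ∈ Finset.univ.erase (⟨m, hmn⟩ : Fin n), w i ^ H i ⟨m, hmn⟩)⁻¹)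
        (hdiag ⟨m, hmn⟩)
      set w' : Fin n → Kˣ := Function.update w ⟨m, hmn⟩ b with hw'
      have hww' : ∀ i : Fin n, i ≠ ⟨m, hmn⟩ → w' i = w i := fun i hi =>
        Function.update_of_ne hi _ _
      have hcols : ∀ j : Fin n, m ≤ (j : ℕ) → ∏ i, w' i ^ H i j = 1 := by
        intro j hj
        by_cases hje : j = ⟨m, hmn⟩
        · subst hje
          rw [← Finset.mul_prod_erase _ _ (Finset.mem_univ (⟨m, hmn⟩ : Fin n))]
          have h1 : w' ⟨m, hmn⟩ = b := Function.update_self _ _ _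
          have h2 : ∏ i ∈ Finset.univ.erase (⟨m, hmn⟩ : Fin n), w' i ^ H i ⟨m, hmn⟩
              = ∏ i ∈ Finset.univ.erase (⟨m, hmn⟩ : Fin n), w i ^ H i ⟨m, hmn⟩ :=
            Finset.prod_congr rfl fun i hi => by
              rw [hww' i (Finset.ne_of_mem_erase hi)]
          rw [h1, h2, hb, inv_mul_cancel]
        · have hj' : m + 1 ≤ (j : ℕ) := by
            rcases Nat.lt_or_ge (j : ℕ) (m + 1) with h | h
            · exact absurd (Fin.ext (by omega : (j : ℕ) = m)) hje
            · exact h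
          rw [← hw j hj']
          refine Finset.prod_congr rfl fun i _ => ?_
          by_cases hie : i = ⟨m, hmn⟩
          · subst hie
            have : H ⟨m, hmn⟩ j = 0 := hlow ⟨m, hmn⟩ j (show m < (j : ℕ) by omega)
            rw [this, zpow_zero, zpow_zero]
          · rw [hww' i hie]
      obtain ⟨t, ht1, ht2⟩ := ih w' hcols
      refine ⟨t, fun i hi => ?_, ht2⟩
      rw [ht1 i (by omega), hww' i (fun h => by rw [h] at hi; simp at hi)]
    · obtain ⟨t, ht1, ht2⟩ := ih w (fun j hj =>
        absurd (lt_of_lt_of_le j.isLt (not_lt.1 hmn)) (not_lt.2 hj))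
      exact ⟨t, fun i hi => ht1 i (by omega), ht2⟩

end Helpers

section MainHelpers

variable {K : Type*} [Field K] {k N r : ℕ}

private lemma xvec_low (hkN : k ≤ N) (hNr : N ≤ r) (z : Fin k → Kˣ) (i : Fin r)
    (h : (i : ℕ) < N - k) : xvec hkN hNr z i = 0 := by
  unfold xvec; rw [dif_pos h]

private lemma xvec_mid (hkN : k ≤ N) (hNr : N ≤ r) (z : Fin k → Kˣ) (i : Fin r)
    (h1 : ¬ (i : ℕ) < N - k) (h2 : (i : ℕ) < N) (j : Fin k)
    (hj : (j : ℕ) = (i : ℕ) - (N - k)) : xvec hkN hNr z i = (z j : K) := by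
  unfold xvec; rw [dif_neg h1, dif_pos h2]
  exact congrArg (fun a : Fin k => (z a : K)) (Fin.ext hj.symm)

private lemma xvec_high (hkN : k ≤ N) (hNr : N ≤ r) (z : Fin k → Kˣ) (i : Fin r)
    (h : ¬ (i : ℕ) < N) : xvec hkN hNr z i = 1 := by
  unfold xvec; rw [dif_neg (by omega), dif_neg h]

private def wvec (hkN : k ≤ N) (y y' : Fin k → Kˣ) : Fin N → Kˣ :=
  fun i =>
    if h : (i : ℕ) < N - k then 1
    else y' ⟨(i : ℕ) - (N - k), by have := i.isLt; omega⟩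
      * (y ⟨(i : ℕ) - (N - k), by have := i.isLt; omega⟩)⁻¹

private lemma wvec_mid (hkN : k ≤ N) (y y' : Fin k → Kˣ) (i : Fin N)
    (h : ¬ (i : ℕ) < N - k) (j : Fin k) (hj : (j : ℕ) = (i : ℕ) - (N - k)) :
    wvec hkN y y' i = y' j * (y j)⁻¹ := by
  unfold wvec; rw [dif_neg h]
  exact congrArg₂ (fun a b : Fin k => y' a * (y b)⁻¹) (Fin.ext hj.symm) (Fin.ext hj.symm)

private def extendOne {M : Type*} [One M] {N r : ℕ} (u : Fin N → M) : Fin r → M :=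
  fun i => if h : (i : ℕ) < N then u ⟨(i : ℕ), h⟩ else 1

private lemma extendOne_lt {M : Type*} [One M] {N r : ℕ} (u : Fin N → M) (i : Fin r)
    (h : (i : ℕ) < N) : extendOne u i = u ⟨(i : ℕ), h⟩ := dif_pos h

private lemma extendOne_ge {M : Type*} [One M] {N r : ℕ} (u : Fin N → M) (i : Fin r)
    (h : ¬ (i : ℕ) < N) : extendOne u i = 1 := dif_neg h

end MainHelpers

/-- Lemma 3.8 '2rep': two `v`-normalized tuples `x(y)`, `x(y')`
lie in the same `G`-orbit iff `y^{L2} = y'^{L2}`. -/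
theorem stmt_4 {K : Type*} [Field K] [IsAlgClosed K] {k N r : ℕ}
    (hk : 0 < k) (hkN : k ≤ N) (hNr : N ≤ r)
    (A : Matrix (Fin r) (Fin N) ℤ)
    (T : Matrix (Fin N) (Fin N) ℤ) (hT : IsUnit T.det)
    (hlow : ∀ i j : Fin N, (i : ℕ) < (j : ℕ) → (firstRows hNr A * T) i j = 0)
    (hdet : (firstRows hNr A).det ≠ 0)
    (hchar : ∀ p : ℕ, 0 < p → CharP K p → ¬ ((p : ℤ) ∣ (firstRows hNr A).det))
    (y y' : Fin k → Kˣ) :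
    (∃ t : Fin r → Kˣ,
        (∀ j : Fin N, ∏ i : Fin r, t i ^ A i j = 1) ∧
        (∀ i : Fin r, (t i : K) * xvec hkN hNr y i = xvec hkN hNr y' i))
      ↔ ∀ j : Fin k,
          ∏ i : Fin k, y i ^ lowerRight hkN (firstRows hNr A * T) i j
            = ∏ i : Fin k, y' i ^ lowerRight hkN (firstRows hNr A * T) i j := by
  classical
  set H := firstRows hNr A * T with hHdef
  have hdetH : H.det ≠ 0 := by
    rw [hHdef, Matrix.det_mul]
    exact mul_ne_zero hdet hT.ne_zero
  have hdiag : ∀ i : Fin N, H i i ≠ 0 := fun i h0 =>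
    hdetH (by
      rw [Matrix.det_of_lowerTriangular H (fun i j hij => hlow i j hij)]
      exact Finset.prod_eq_zero (Finset.mem_univ i) h0)
  -- conversion between A'-columns and H-columns
  have hHC : ∀ u : Fin N → Kˣ,
      (∀ j, ∏ i, u i ^ (firstRows hNr A) i j = 1) ↔ (∀ j, ∏ i, u i ^ H i j = 1) := by
    intro u
    constructor
    · intro h j
      rw [hHdef, prod_pow_mul]
      simp [h]
    · intro h j
      have hinv : Invertible T := T.invertibleOfIsUnitDet hT
      have hA' : firstRows hNr A = H * ⅟T := by
        rw [hHdef, Matrix.mul_assoc, mul_invOf_self, Matrix.mul_one]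
      rw [hA', prod_pow_mul]
      simp [h]
  have key : ∀ e : Fin k → ℤ,
      ∏ i, (y' i * (y i)⁻¹) ^ e i = (∏ i, y' i ^ e i) * (∏ i, y i ^ e i)⁻¹ := by
    intro e
    rw [← Finset.prod_inv_distrib, ← Finset.prod_mul_distrib]
    exact Finset.prod_congr rfl fun i _ => by rw [mul_zpow, inv_zpow]
  constructor
  · rintro ⟨t, hG, horb⟩ j
    have ht_high : ∀ i : Fin r, ¬ (i : ℕ) < N → t i = 1 := by
      intro i hi
      have h := horb i
      rw [xvec_high hkN hNr y i hi, xvec_high hkN hNr y' i hi, mul_one] at h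
      exact Units.ext (h.trans Units.val_one.symm)
    have hu_mid : ∀ i : Fin k, t (embCast hNr (embShift hkN i)) = y' i * (y i)⁻¹ := by
      intro i
      have h := horb (embCast hNr (embShift hkN i))
      rw [xvec_mid hkN hNr y _ (by show ¬ N - k + (i : ℕ) < N - k; omega)
            (by show N - k + (i : ℕ) < N; have := i.isLt; omega) i
            (by show (i : ℕ) = N - k + (i : ℕ) - (N - k); omega),
          xvec_mid hkN hNr y' _ (by show ¬ N - k + (i : ℕ) < N - k; omega)
            (by show N - k + (i : ℕ) < N; have := i.isLt; omega) i
            (by show (i : ℕ) = N - k + (i : ℕ) - (N - k); omega)] at h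
      have h' : t (embCast hNr (embShift hkN i)) * y i = y' i :=
        Units.ext (by rw [Units.val_mul]; exact h)
      exact eq_mul_inv_iff_mul_eq.mpr h'
    have hGN : ∀ j : Fin N, ∏ i : Fin N, t (embCast hNr i) ^ firstRows hNr A i j = 1 := by
      intro j
      rw [← hG j]
      exact (prod_eq_prod_emb (embCast hNr) (fun i => t i ^ A i j) (fun b hb => by
        have hN : N ≤ (b : ℕ) := by
          by_contra hlt
          exact hb ⟨(b : ℕ), by omega⟩ (Fin.ext rfl)
        show t b ^ A b j = 1
        rw [ht_high b (by omega), one_zpow])).symm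
    have hGH := (hHC (fun i => t (embCast hNr i))).mp hGN
    have h1 := hGH (embShift hkN j)
    rw [prod_shift hkN H hlow _ _ (by show N - k ≤ N - k + (j : ℕ); omega)] at h1
    have h2 : ∏ i : Fin k, (y' i * (y i)⁻¹) ^ lowerRight hkN H i j = 1 := by
      rw [← h1]
      refine Finset.prod_congr rfl fun i _ => ?_
      rw [hu_mid i]
      rfl
    rw [key] at h2
    exact (mul_inv_eq_one.mp h2).symm
  · intro hyy
    have hwcols : ∀ j : Fin N, N - k ≤ (j : ℕ) →
        ∏ i, wvec hkN y y' i ^ H i j = 1 := by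
      intro j hj
      rw [prod_shift hkN H hlow _ _ hj]
      have hjeq : j = embShift hkN ⟨(j : ℕ) - (N - k), by have := j.isLt; omega⟩ :=
        Fin.ext (show (j : ℕ) = N - k + ((j : ℕ) - (N - k)) by omega)
      have hstep : ∏ i : Fin k, wvec hkN y y' (embShift hkN i) ^ H (embShift hkN i) j
          = ∏ i : Fin k, (y' i * (y i)⁻¹) ^
              lowerRight hkN H i ⟨(j : ℕ) - (N - k), by have := j.isLt; omega⟩ :=
        Finset.prod_congr rfl fun i _ => by
          rw [wvec_mid hkN y y' _ (by show ¬ N - k + (i : ℕ) < N - k; omega) i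
              (by show (i : ℕ) = N - k + (i : ℕ) - (N - k); omega)]
          congr 1
          conv_lhs => rw [hjeq]
          rfl
      rw [hstep, key]
      exact mul_inv_eq_one.mpr (hyy _).symm
    obtain ⟨u, hueq, hucols⟩ := solve_triangular H hlow hdiag (N - k) (wvec hkN y y') hwcols
    have hA'cols : ∀ j, ∏ i, u i ^ firstRows hNr A i j = 1 := (hHC u).mpr hucols
    refine ⟨extendOne u, fun j => ?_, fun i => ?_⟩
    · rw [prod_eq_prod_emb (embCast hNr) (fun i => extendOne u i ^ A i j) (fun b hb => by
        have hN : N ≤ (b : ℕ) := by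
          by_contra hlt
          exact hb ⟨(b : ℕ), by omega⟩ (Fin.ext rfl)
        show extendOne u b ^ A b j = 1
        rw [extendOne_ge u b (by omega), one_zpow])]
      calc ∏ i : Fin N, extendOne u (embCast hNr i) ^ A (embCast hNr i) j
          = ∏ i : Fin N, u i ^ firstRows hNr A i j :=
            Finset.prod_congr rfl fun i _ => by
              rw [extendOne_lt u (embCast hNr i)
                (show ((embCast hNr i : Fin r) : ℕ) < N from i.isLt)]
              rfl
        _ = 1 := hA'cols j
    · by_cases h1 : (i : ℕ) < N - k
      · rw [xvec_low hkN hNr y i h1, xvec_low hkN hNr y' i h1, mul_zero]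
      · by_cases h2 : (i : ℕ) < N
        · rw [xvec_mid hkN hNr y i h1 h2 ⟨(i : ℕ) - (N - k), by omega⟩ rfl,
              xvec_mid hkN hNr y' i h1 h2 ⟨(i : ℕ) - (N - k), by omega⟩ rfl,
              extendOne_lt u i h2, hueq ⟨(i : ℕ), h2⟩ (by show N - k ≤ (i : ℕ); omega),
              wvec_mid hkN y y' ⟨(i : ℕ), h2⟩ (by show ¬ (i : ℕ) < N - k; omega)
                ⟨(i : ℕ) - (N - k), by omega⟩ rfl,
              ← Units.val_mul, inv_mul_cancel_right]
        · rw [xvec_high hkN hNr y i h2, xvec_high hkN hNr y' i h2,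
              extendOne_ge u i h2, Units.val_one, one_mul]
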